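/- Let n ≥ 1 and let λ ↦ p_λ be a map from the open interval (0,1) to ℂ[X] such that deg p_λ = n for all λ, each coefficient of p_λ is a continuous function of λ, and each p_λ has exactly three distinct critical values. For λ ∈ (0,1) define Passport(λ) to be the multiset, taken over the three distinct critical values α of p_λ, of the multisets of root multiplicities of p_λ − α (so Passport(λ) is a multiset of three multisets of natural numbers). Then Passport(λ) is the same for all λ ∈ (0,1). -/

import Mathlib

open Polynomial

/-- The set of critical values of a polynomial `p`: values of `p` at the roots of `p'`. -/
noncomputable def criticalValues (p : ℂ[X]) : Set ℂ :=
  (fun x => p.eval x) '' {x : ℂ | p.derivative.eval x = 0}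

/-- The multiset of multiplicities of the roots of `p - α` (one entry per distinct root). -/
noncomputable def fiberMults (p : ℂ[X]) (α : ℂ) : Multiset ℕ :=
  (p - C α).roots.toFinset.val.map fun x => (p - C α).rootMultiplicity x

/-- The passport of `p`: the multiset, over the distinct critical values `α` of `p`,
of the multisets of root multiplicities of `p - α`. -/
noncomputable def passport (p : ℂ[X]) : Multiset (Multiset ℕ) :=
  (p.derivative.roots.toFinset.image fun x => p.eval x).val.map fun α => fiberMults p α

open Filter Topology

section Aux

variable {d n : ℕ}

lemma roots_card_C (q : ℂ[X]) : q.roots.card = q.natDegree :=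
  splits_iff_card_roots.mp (IsAlgClosed.splits q)

lemma exists_ofFn_eq (m : Multiset ℂ) (h : Multiset.card m = d) :
    ∃ f : Fin d → ℂ, ((List.ofFn f : List ℂ) : Multiset ℂ) = m := by
  obtain ⟨l, rfl⟩ : ∃ l : List ℂ, (l : Multiset ℂ) = m := ⟨m.toList, m.coe_toList⟩
  rw [Multiset.coe_card] at h
  subst h
  exact ⟨l.get, by rw [List.ofFn_get]⟩

lemma tendsto_eval (Q : ℂ[X]) (hQ : Q.natDegree ≤ d)
    (q : ℕ → ℂ[X]) (hq : ∀ k, (q k).natDegree ≤ d)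
    (hc : ∀ i, Tendsto (fun k => (q k).coeff i) atTop (nhds (Q.coeff i)))
    {z : ℕ → ℂ} {w : ℂ} (hz : Tendsto z atTop (nhds w)) :
    Tendsto (fun k => (q k).eval (z k)) atTop (nhds (Q.eval w)) := by
  have h1 : ∀ k, (q k).eval (z k) = ∑ i ∈ Finset.range (d+1), (q k).coeff i * (z k)^i :=
    fun k => eval_eq_sum_range' (Nat.lt_succ_of_le (hq k)) _
  have h2 : Q.eval w = ∑ i ∈ Finset.range (d+1), Q.coeff i * w^i :=
    eval_eq_sum_range' (Nat.lt_succ_of_le hQ) _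
  simp only [h1, h2]
  exact tendsto_finset_sum _ fun i _ => (hc i).mul (hz.pow i)

lemma root_norm_le {q : ℂ[X]} (hq : 1 ≤ q.natDegree) {r : ℂ} (hr : q.eval r = 0) :
    ‖r‖ ≤ max 1 ((∑ i ∈ Finset.range q.natDegree, ‖q.coeff i‖) / ‖q.leadingCoeff‖) := by
  set d := q.natDegree with hd
  have hq0 : q ≠ 0 := by intro h; rw [h] at hd; simp [hd] at hq
  have hlc : 0 < ‖q.leadingCoeff‖ := by
    simpa using norm_pos_iff.mpr (leadingCoeff_ne_zero.mpr hq0)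
  rcases le_or_gt ‖r‖ 1 with h | h
  · exact le_max_of_le_left h
  · refine le_max_of_le_right ((le_div_iff₀ hlc).mpr ?_)
    have he : q.eval r = ∑ i ∈ Finset.range (d+1), q.coeff i * r^i :=
      eval_eq_sum_range' (Nat.lt_succ_of_le le_rfl) _
    rw [Finset.sum_range_succ] at he
    have hlead : q.coeff d * r^d = -∑ i ∈ Finset.range d, q.coeff i * r^i := by
      rw [hr] at he; linear_combination -he
    have h1 : ‖q.leadingCoeff‖ * ‖r‖^d ≤ ∑ i ∈ Finset.range d, ‖q.coeff i‖ * ‖r‖^i := by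
      have := congrArg norm hlead
      rw [norm_neg, norm_mul, norm_pow] at this
      rw [← Polynomial.leadingCoeff] at this
      calc ‖q.leadingCoeff‖ * ‖r‖^d = ‖∑ i ∈ Finset.range d, q.coeff i * r^i‖ := this
        _ ≤ ∑ i ∈ Finset.range d, ‖q.coeff i * r^i‖ := norm_sum_le _ _
        _ = ∑ i ∈ Finset.range d, ‖q.coeff i‖ * ‖r‖^i := by simp [norm_mul, norm_pow]
    have h2 : ∑ i ∈ Finset.range d, ‖q.coeff i‖ * ‖r‖^i ≤
        (∑ i ∈ Finset.range d, ‖q.coeff i‖) * ‖r‖^(d-1) := by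
      rw [Finset.sum_mul]
      refine Finset.sum_le_sum fun i hi => ?_
      have : ‖r‖^i ≤ ‖r‖^(d-1) :=
        pow_le_pow_right₀ h.le (Nat.le_sub_one_of_lt (Finset.mem_range.mp hi))
      exact mul_le_mul_of_nonneg_left this (norm_nonneg _)
    have hrpos : 0 < ‖r‖^(d-1) := pow_pos (lt_trans one_pos h) _
    have h3 : ‖q.leadingCoeff‖ * ‖r‖^d = (‖q.leadingCoeff‖ * ‖r‖) * ‖r‖^(d-1) := by
      rw [mul_assoc, ← pow_succ']
      congr 2
      omega
    nlinarith [h1, h2, h3, hlc, norm_nonneg r]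

lemma eval_prod_form (A : ℂ[X]) (hA : A.natDegree = d)
    (f : Fin d → ℂ) (hf : ((List.ofFn f : List ℂ) : Multiset ℂ) = A.roots) (z : ℂ) :
    A.eval z = A.coeff d * ∏ i, (z - f i) := by
  subst hA
  conv_lhs => rw [(IsAlgClosed.splits A).eq_prod_roots]
  rw [← hf, Multiset.map_coe, Multiset.prod_coe, List.map_ofFn, List.prod_ofFn,
    eval_mul, eval_C, eval_prod, coeff_natDegree]
  simp [Function.comp]

/-- Continuity of roots: eventually the roots of `q k` can be matched with
the roots of `Q` to within `ε`. -/
lemma roots_matching (hd : 1 ≤ d) (Q : ℂ[X]) (hQ : Q.natDegree = d)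
    (q : ℕ → ℂ[X]) (hq : ∀ k, (q k).natDegree = d)
    (hc : ∀ i, Tendsto (fun k => (q k).coeff i) atTop (nhds (Q.coeff i)))
    {ε : ℝ} (hε : 0 < ε) :
    ∀ᶠ k in atTop, ∃ σ τ : Fin d → ℂ,
      ((List.ofFn σ : List ℂ) : Multiset ℂ) = (q k).roots ∧
      ((List.ofFn τ : List ℂ) : Multiset ℂ) = Q.roots ∧ ∀ i, dist (σ i) (τ i) < ε := by
  by_contra hcon
  obtain ⟨φ, hφm, hφ⟩ := extraction_of_frequently_atTop (not_eventually.mp hcon)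
  have hq0 : ∀ k, q k ≠ 0 := by
    intro k h
    have := hq k; rw [h] at this; simp at this; omega
  have hQ0 : Q ≠ 0 := by intro h; rw [h] at hQ; simp at hQ; omega
  choose σs hσs using fun k =>
    exists_ofFn_eq ((q (φ k)).roots) (by rw [roots_card_C, hq])
  set b : ℕ → ℝ := fun k => max 1 ((∑ i ∈ Finset.range d, ‖(q (φ k)).coeff i‖) /
      ‖(q (φ k)).coeff d‖) with hb
  have hblim : Tendsto b atTop
      (nhds (max 1 ((∑ i ∈ Finset.range d, ‖Q.coeff i‖) / ‖Q.coeff d‖))) := by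
    refine Tendsto.max tendsto_const_nhds (Tendsto.div ?_ ?_ ?_)
    · exact tendsto_finset_sum _ fun i _ =>
        ((hc i).comp hφm.tendsto_atTop).norm
    · exact ((hc d).comp hφm.tendsto_atTop).norm
    · rw [← hQ, coeff_natDegree]
      simpa using norm_pos_iff.mpr (leadingCoeff_ne_zero.mpr hQ0)
  obtain ⟨M, hM⟩ := hblim.bddAbove_range
  have hM0 : (0:ℝ) ≤ M := le_trans (by simp [hb]) (hM ⟨0, rfl⟩)
  have hroot : ∀ k i, (q (φ k)).eval (σs k i) = 0 := by
    intro k i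
    have : σs k i ∈ (q (φ k)).roots := by
      rw [← hσs k]; exact Multiset.mem_coe.mpr (List.mem_ofFn.mpr ⟨i, rfl⟩)
    exact (mem_roots (hq0 _)).mp this
  have hmem : ∀ k, σs k ∈ Metric.closedBall (0 : Fin d → ℂ) M := by
    intro k
    rw [Metric.mem_closedBall, dist_pi_le_iff hM0]
    intro i
    simp only [Pi.zero_apply, dist_zero_right]
    calc ‖σs k i‖ ≤ b k := by
          have := root_norm_le (q := q (φ k)) (by rw [hq]; exact hd) (hroot k i)
          rw [hq] at this
          rw [hb]
          simpa [← coeff_natDegree (p := q (φ k)), hq] using this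
      _ ≤ M := hM ⟨k, rfl⟩
  obtain ⟨L, _, ψ, hψm, hψlim⟩ :=
    tendsto_subseq_of_bounded Metric.isBounded_closedBall hmem
  have hLpt : ∀ i, Tendsto (fun k => σs (ψ k) i) atTop (nhds (L i)) :=
    fun i => tendsto_pi_nhds.mp hψlim i
  have hlc : Tendsto (fun k => (q (φ (ψ k))).coeff d) atTop (nhds (Q.coeff d)) :=
    (hc d).comp (hφm.comp hψm).tendsto_atTop
  have hev : ∀ z : ℂ, Q.eval z = Q.coeff d * ∏ i, (z - L i) := by
    intro z
    have h1 : Tendsto (fun k => (q (φ (ψ k))).eval z) atTop (nhds (Q.eval z)) :=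
      tendsto_eval Q hQ.le _ (fun k => (hq _).le)
        (fun i => (hc i).comp (hφm.comp hψm).tendsto_atTop) tendsto_const_nhds
    have h2 : ∀ k, (q (φ (ψ k))).eval z =
        (q (φ (ψ k))).coeff d * ∏ i, (z - σs (ψ k) i) :=
      fun k => eval_prod_form _ (hq _) _ (hσs _) z
    simp only [h2] at h1
    have h3 : Tendsto (fun k => (q (φ (ψ k))).coeff d * ∏ i, (z - σs (ψ k) i)) atTop
        (nhds (Q.coeff d * ∏ i, (z - L i))) :=
      hlc.mul (tendsto_finset_prod _ fun i _ => tendsto_const_nhds.sub (hLpt i))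
    exact tendsto_nhds_unique h1 h3
  have hQfact : Q = C (Q.coeff d) * ∏ i, (X - C (L i)) := by
    apply Polynomial.funext
    intro z
    rw [hev z, eval_mul, eval_C, eval_prod]
    simp
  have hcd : Q.coeff d ≠ 0 := by
    rw [← hQ, coeff_natDegree]; exact leadingCoeff_ne_zero.mpr hQ0
  have hQroots : ((List.ofFn L : List ℂ) : Multiset ℂ) = Q.roots := by
    rw [hQfact, roots_C_mul _ hcd]
    have : (∏ i, (X - C (L i))) =
        ((((List.ofFn L : List ℂ) : Multiset ℂ)).map fun a => X - C a).prod := by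
      rw [Multiset.map_coe, Multiset.prod_coe, List.map_ofFn, List.prod_ofFn]
      rfl
    rw [this, roots_multiset_prod_X_sub_C]
  have hev2 : ∀ᶠ k in atTop, ∀ i, dist (σs (ψ k) i) (L i) < ε :=
    eventually_all.mpr fun i => Metric.tendsto_nhds.mp (hLpt i) ε hε
  obtain ⟨K, hK⟩ := hev2.exists
  exact hφ (ψ K) ⟨σs (ψ K), L, hσs _, hQroots, hK⟩

noncomputable def CVf (q : ℂ[X]) : Finset ℂ :=
  q.derivative.roots.toFinset.image fun x => q.eval x

lemma deriv_roots_eq_sum (q : ℂ[X]) (hq : 1 ≤ q.natDegree) :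
    q.derivative.roots
      = ∑ β ∈ CVf q, ((q - C β).roots - (q - C β).roots.toFinset.val) := by
  classical
  have hq' : q.derivative ≠ 0 := by
    intro h
    have := natDegree_eq_zero_of_derivative_eq_zero h
    omega
  have hfib0 : ∀ β : ℂ, q - C β ≠ 0 := by
    intro β h
    have h2 : (q - C β).natDegree = q.natDegree := natDegree_sub_C
    rw [h] at h2
    simp at h2
    omega
  have hder : ∀ β : ℂ, (q - C β).derivative = q.derivative := by
    intro β; rw [derivative_sub, derivative_C, sub_zero]
  have hrootfib : ∀ (β : ℂ) (x : ℂ), x ∈ (q - C β).roots ↔ q.eval x = β := by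
    intro β x
    rw [mem_roots (hfib0 β)]
    constructor
    · intro h
      have := h
      rw [IsRoot, eval_sub, eval_C, sub_eq_zero] at this
      exact this
    · intro h
      rw [IsRoot, eval_sub, eval_C, h, sub_self]
  ext x
  rw [Multiset.count_sum']
  have hterm : ∀ β : ℂ,
      Multiset.count x ((q - C β).roots - (q - C β).roots.toFinset.val)
      = rootMultiplicity x (q - C β) - (if x ∈ (q - C β).roots then 1 else 0) := by
    intro β
    rw [Multiset.count_sub, count_roots, Multiset.toFinset_val, Multiset.count_dedup]
  by_cases hx : q.derivative.eval x = 0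
  · have hxmem : x ∈ q.derivative.roots.toFinset :=
      Multiset.mem_toFinset.mpr ((mem_roots hq').mpr hx)
    have hβmem : q.eval x ∈ CVf q := Finset.mem_image.mpr ⟨x, hxmem, rfl⟩
    have hxroot : x ∈ (q - C (q.eval x)).roots := (hrootfib _ x).mpr rfl
    rw [Finset.sum_eq_single (q.eval x)]
    · rw [hterm, if_pos hxroot, count_roots, ← hder (q.eval x),
        derivative_rootMultiplicity_of_root ((mem_roots (hfib0 _)).mp hxroot)]
    · intro β _ hβne
      rw [hterm]
      have hnx : x ∉ (q - C β).roots := fun h => hβne ((hrootfib β x).mp h).symm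
      rw [if_neg hnx, Nat.sub_zero]
      exact rootMultiplicity_eq_zero (fun h => hnx ((mem_roots (hfib0 β)).mpr h))
    · intro h
      exact absurd hβmem h
  · have hL : Multiset.count x q.derivative.roots = 0 := by
      rw [count_roots, rootMultiplicity_eq_zero hx]
    rw [hL]
    refine (Finset.sum_eq_zero ?_).symm
    intro β _
    rw [hterm]
    by_cases hxr : x ∈ (q - C β).roots
    · rw [if_pos hxr]
      have h1 : rootMultiplicity x ((q - C β).derivative)
          = rootMultiplicity x (q - C β) - 1 :=
        derivative_rootMultiplicity_of_root ((mem_roots (hfib0 β)).mp hxr)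
      rw [hder β, rootMultiplicity_eq_zero hx] at h1
      omega
    · rw [if_neg hxr, Nat.sub_zero]
      exact rootMultiplicity_eq_zero (fun h => hxr ((mem_roots (hfib0 β)).mpr h))

lemma card_finset_sum {α β : Type*} (s : Finset β) (f : β → Multiset α) :
    Multiset.card (∑ b ∈ s, f b) = ∑ b ∈ s, Multiset.card (f b) := by
  classical
  induction s using Finset.induction_on with
  | empty => simp
  | insert a s h ih => simp [Finset.sum_insert h, ih]

lemma sum_fibers (q : ℂ[X]) (hq : 1 ≤ q.natDegree) :
    q.natDegree - 1 + ∑ β ∈ CVf q, (q - C β).roots.toFinset.card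
      = (CVf q).card * q.natDegree := by
  classical
  have hfib0 : ∀ β : ℂ, q - C β ≠ 0 := by
    intro β h
    have h2 : (q - C β).natDegree = q.natDegree := natDegree_sub_C
    rw [h] at h2
    simp at h2
    omega
  have hcardfib : ∀ β : ℂ, ((q - C β).roots).card = q.natDegree := by
    intro β; rw [roots_card_C, natDegree_sub_C]
  have hdedup_le : ∀ β : ℂ, (q - C β).roots.toFinset.val ≤ (q - C β).roots := by
    intro β; rw [Multiset.toFinset_val]; exact Multiset.dedup_le _
  have hdercard : q.derivative.roots.card = q.natDegree - 1 := by
    rw [roots_card_C]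
    have := degree_derivative_eq q (by omega)
    have h2 := natDegree_eq_of_degree_eq_some this
    omega
  have hmain := congrArg Multiset.card (deriv_roots_eq_sum q hq)
  rw [hdercard, card_finset_sum] at hmain
  have hterm : ∀ β ∈ CVf q,
      Multiset.card ((q - C β).roots - (q - C β).roots.toFinset.val)
        = q.natDegree - (q - C β).roots.toFinset.card := by
    intro β _
    rw [Multiset.card_sub (hdedup_le β), hcardfib]
    rfl
  rw [Finset.sum_congr rfl hterm] at hmain
  have hle : ∀ β ∈ CVf q, (q - C β).roots.toFinset.card ≤ q.natDegree := by
    intro β _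
    calc (q - C β).roots.toFinset.card ≤ ((q - C β).roots).card :=
          Multiset.toFinset_card_le _
      _ = q.natDegree := hcardfib β
  have hsplit : ∑ β ∈ CVf q, (q.natDegree - (q - C β).roots.toFinset.card)
      + ∑ β ∈ CVf q, (q - C β).roots.toFinset.card = (CVf q).card * q.natDegree := by
    rw [← Finset.sum_add_distrib]
    rw [Finset.sum_congr rfl (fun β hβ => Nat.sub_add_cancel (hle β hβ))]
    simp [Finset.sum_const, mul_comm]
  omega

lemma mem_ofFn_multiset {f : Fin n → ℂ} {y : ℂ} :
    y ∈ ((List.ofFn f : List ℂ) : Multiset ℂ) ↔ ∃ i, f i = y := by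
  rw [Multiset.mem_coe, List.mem_ofFn]

lemma matching_card_le (σ τ : Fin n → ℂ) {ε : ℝ}
    (hsep : ∀ i j, τ i ≠ τ j → 2*ε ≤ dist (τ i) (τ j))
    (hclose : ∀ i, dist (σ i) (τ i) < ε) :
    ((List.ofFn τ : List ℂ) : Multiset ℂ).toFinset.card
      ≤ ((List.ofFn σ : List ℂ) : Multiset ℂ).toFinset.card := by
  classical
  set S := ((List.ofFn σ : List ℂ) : Multiset ℂ)
  set T := ((List.ofFn τ : List ℂ) : Multiset ℂ)
  set g : ℂ → ℂ := fun x => if h : ∃ i, τ i = x then σ h.choose else 0 with hg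
  have hgspec : ∀ x, (∃ i, τ i = x) → (g x ∈ S.toFinset ∧ dist (g x) x < ε) := by
    intro x h
    rw [hg]
    simp only [dif_pos h]
    refine ⟨Multiset.mem_toFinset.mpr (mem_ofFn_multiset.mpr ⟨h.choose, rfl⟩), ?_⟩
    calc dist (σ h.choose) x = dist (σ h.choose) (τ h.choose) := by rw [h.choose_spec]
      _ < ε := hclose _
  refine Finset.card_le_card_of_injOn g ?_ ?_
  · intro x hx
    exact (hgspec x (mem_ofFn_multiset.mp (Multiset.mem_toFinset.mp hx))).1
  · intro x hx x' hx' hgeq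
    by_contra hne
    obtain ⟨i, hi⟩ := mem_ofFn_multiset.mp (Multiset.mem_toFinset.mp hx)
    obtain ⟨i', hi'⟩ := mem_ofFn_multiset.mp (Multiset.mem_toFinset.mp hx')
    have h1 := (hgspec x ⟨i, hi⟩).2
    have h2 := (hgspec x' ⟨i', hi'⟩).2
    have hsep' : 2*ε ≤ dist x x' := by
      rw [← hi, ← hi']
      exact hsep i i' (by rw [hi, hi']; exact hne)
    have : dist x x' < 2*ε := by
      calc dist x x' ≤ dist x (g x) + dist (g x) x' := dist_triangle _ _ _
        _ = dist (g x) x + dist (g x') x' := by rw [dist_comm, hgeq]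
        _ < ε + ε := add_lt_add h1 h2
        _ = 2*ε := by ring
    linarith

lemma matching_counts_eq (σ τ : Fin n → ℂ) {ε : ℝ}
    (hsep : ∀ i j, τ i ≠ τ j → 2*ε ≤ dist (τ i) (τ j))
    (hclose : ∀ i, dist (σ i) (τ i) < ε)
    (hcard : ((List.ofFn σ : List ℂ) : Multiset ℂ).toFinset.card
      ≤ ((List.ofFn τ : List ℂ) : Multiset ℂ).toFinset.card) :
    Multiset.map (fun y => ((List.ofFn σ : List ℂ) : Multiset ℂ).count y)
        ((List.ofFn σ : List ℂ) : Multiset ℂ).toFinset.val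
      = Multiset.map (fun x => ((List.ofFn τ : List ℂ) : Multiset ℂ).count x)
        ((List.ofFn τ : List ℂ) : Multiset ℂ).toFinset.val := by
  classical
  set S := ((List.ofFn σ : List ℂ) : Multiset ℂ) with hS
  set T := ((List.ofFn τ : List ℂ) : Multiset ℂ) with hT
  have hwd : ∀ i i', σ i = σ i' → τ i = τ i' := by
    intro i i' he
    by_contra hne
    have := hsep i i' hne
    have : dist (τ i) (τ i') < 2*ε := by
      calc dist (τ i) (τ i') ≤ dist (τ i) (σ i) + dist (σ i) (τ i') := dist_triangle _ _ _
        _ = dist (σ i) (τ i) + dist (σ i') (τ i') := by rw [dist_comm, he]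
        _ < ε + ε := add_lt_add (hclose i) (hclose i')
        _ = 2*ε := by ring
    linarith
  set F : ℂ → ℂ := fun y => if h : ∃ i, σ i = y then τ h.choose else 0 with hF
  have hFspec : ∀ i, F (σ i) = τ i := by
    intro i
    have h : ∃ i', σ i' = σ i := ⟨i, rfl⟩
    rw [hF]
    simp only [dif_pos h]
    exact hwd _ _ h.choose_spec
  have hmaps : ∀ y ∈ S.toFinset, F y ∈ T.toFinset := by
    intro y hy
    obtain ⟨i, rfl⟩ := mem_ofFn_multiset.mp (Multiset.mem_toFinset.mp hy)
    rw [hFspec]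
    exact Multiset.mem_toFinset.mpr (mem_ofFn_multiset.mpr ⟨i, rfl⟩)
  have hsurj : ∀ x ∈ T.toFinset, ∃ y ∈ S.toFinset, F y = x := by
    intro x hx
    obtain ⟨i, rfl⟩ := mem_ofFn_multiset.mp (Multiset.mem_toFinset.mp hx)
    exact ⟨σ i, Multiset.mem_toFinset.mpr (mem_ofFn_multiset.mpr ⟨i, rfl⟩), hFspec i⟩
  have himage : S.toFinset.image F = T.toFinset := by
    apply Finset.Subset.antisymm
    · intro x hx
      obtain ⟨y, hy, rfl⟩ := Finset.mem_image.mp hx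
      exact hmaps y hy
    · intro x hx
      obtain ⟨y, hy, rfl⟩ := hsurj x hx
      exact Finset.mem_image.mpr ⟨y, hy, rfl⟩
  have hcardim : (S.toFinset.image F).card = S.toFinset.card := by
    rw [himage]
    exact le_antisymm hcard (by rw [← himage]; exact Finset.card_image_le) |>.symm
  have hinj : Set.InjOn F S.toFinset := Finset.injOn_of_card_image_eq hcardim
  have hcount : ∀ y ∈ S.toFinset, T.count (F y) = S.count y := by
    intro y hy
    obtain ⟨i0, rfl⟩ := mem_ofFn_multiset.mp (Multiset.mem_toFinset.mp hy)
    have hSm : S = Multiset.map σ Finset.univ.val := by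
      rw [hS, List.ofFn_eq_map]
      rfl
    have hTm : T = Multiset.map τ Finset.univ.val := by
      rw [hT, List.ofFn_eq_map]
      rfl
    rw [hSm, hTm, Multiset.count_map, Multiset.count_map]
    congr 1
    apply Multiset.filter_congr
    intro i _
    constructor
    · intro h
      have h1 : F (σ i) = F (σ i0) := by rw [hFspec i, ← h]
      have hmem : ∀ j : Fin n, σ j ∈ (S.toFinset : Set ℂ) := fun j =>
        Multiset.mem_toFinset.mpr (mem_ofFn_multiset.mpr ⟨j, rfl⟩)
      exact (hinj (hmem i) (hmem i0) h1).symm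
    · intro h
      rw [h, hFspec i]
  have hnodup : (Multiset.map F S.toFinset.val).Nodup :=
    Multiset.Nodup.map_on
      (fun x hx y hy => hinj (Finset.mem_coe.mpr hx) (Finset.mem_coe.mpr hy))
      S.toFinset.nodup
  have hval : T.toFinset.val = Multiset.map F S.toFinset.val := by
    rw [← himage, Finset.image_val, Multiset.dedup_eq_self.mpr hnodup]
  rw [hval, Multiset.map_map]
  exact Multiset.map_congr rfl (fun y hy => (hcount y hy).symm)

lemma exists_sep (s : Finset ℂ) :
    ∃ ε : ℝ, 0 < ε ∧ ∀ a ∈ s, ∀ b ∈ s, a ≠ b → 2*ε ≤ dist a b := by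
  classical
  set D : Finset ℝ := ((s ×ˢ s).filter fun ab => ab.1 ≠ ab.2).image fun ab => dist ab.1 ab.2
    with hD
  rcases D.eq_empty_or_nonempty with h | h
  · refine ⟨1, one_pos, fun a ha b hb hne => absurd ?_ (Finset.notMem_empty (dist a b))⟩
    rw [← h, hD]
    exact Finset.mem_image.mpr ⟨(a, b), Finset.mem_filter.mpr
      ⟨Finset.mem_product.mpr ⟨ha, hb⟩, hne⟩, rfl⟩
  · refine ⟨D.min' h / 2, ?_, ?_⟩
    · have : ∀ x ∈ D, 0 < x := by
        intro x hx
        obtain ⟨ab, hab, rfl⟩ := Finset.mem_image.mp hx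
        exact dist_pos.mpr (Finset.mem_filter.mp hab).2
      exact half_pos (this _ (D.min'_mem h))
    · intro a ha b hb hne
      have hmem : dist a b ∈ D := Finset.mem_image.mpr ⟨(a, b), Finset.mem_filter.mpr
        ⟨Finset.mem_product.mpr ⟨ha, hb⟩, hne⟩, rfl⟩
      have := D.min'_le _ hmem
      linarith

lemma unif_eval (Q : ℂ[X]) (hQ : Q.natDegree ≤ n)
    (q : ℕ → ℂ[X]) (hq : ∀ k, (q k).natDegree ≤ n)
    (hc : ∀ i, Tendsto (fun k => (q k).coeff i) atTop (nhds (Q.coeff i)))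
    (M : ℝ) {δ : ℝ} (hδ : 0 < δ) :
    ∀ᶠ k in atTop, ∀ z : ℂ, ‖z‖ ≤ M → dist ((q k).eval z) (Q.eval z) < δ := by
  set c : ℕ → ℝ := fun k =>
    ∑ i ∈ Finset.range (n+1), ‖(q k).coeff i - Q.coeff i‖ * (max 1 M)^i with hcdef
  have hc0 : Tendsto c atTop (nhds 0) := by
    have : Tendsto c atTop (nhds (∑ i ∈ Finset.range (n+1), 0 * (max 1 M)^i)) := by
      refine tendsto_finset_sum _ fun i _ => Tendsto.mul_const _ ?_
      have h0 : Tendsto (fun k => ‖(q k).coeff i - Q.coeff i‖) atTop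
          (nhds ‖Q.coeff i - Q.coeff i‖) :=
        ((hc i).sub (tendsto_const_nhds (x := Q.coeff i))).norm
      simpa using h0
    simpa using this
  filter_upwards [hc0 (Metric.ball_mem_nhds _ hδ)] with k hk z hz
  have hck : c k < δ := by
    have := hk
    simp only [Set.mem_preimage, Metric.mem_ball, Real.dist_eq] at this
    calc c k ≤ |c k - 0| := by rw [sub_zero]; exact le_abs_self _
      _ < δ := this
  have he1 : (q k).eval z = ∑ i ∈ Finset.range (n+1), (q k).coeff i * z^i :=
    eval_eq_sum_range' (Nat.lt_succ_of_le (hq k)) _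
  have he2 : Q.eval z = ∑ i ∈ Finset.range (n+1), Q.coeff i * z^i :=
    eval_eq_sum_range' (Nat.lt_succ_of_le hQ) _
  rw [dist_eq_norm, he1, he2, ← Finset.sum_sub_distrib]
  calc ‖∑ i ∈ Finset.range (n+1), ((q k).coeff i * z^i - Q.coeff i * z^i)‖
      ≤ ∑ i ∈ Finset.range (n+1), ‖((q k).coeff i - Q.coeff i) * z^i‖ := by
        refine (norm_sum_le _ _).trans_eq ?_
        congr 1
        ext i
        rw [sub_mul]
    _ ≤ c k := by
        rw [hcdef]
        refine Finset.sum_le_sum fun i _ => ?_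
        rw [norm_mul, norm_pow]
        refine mul_le_mul_of_nonneg_left
          (pow_le_pow_left₀ (norm_nonneg _) ?_ i) (norm_nonneg _)
        exact le_trans hz (le_max_right _ _)
    _ < δ := hck

lemma unif_mod (Q : ℂ[X]) (s : Finset ℂ) {δ : ℝ} (hδ : 0 < δ) :
    ∃ η : ℝ, 0 < η ∧ ∀ x ∈ s, ∀ y : ℂ, dist y x < η → dist (Q.eval y) (Q.eval x) < δ := by
  classical
  have hcont : ∀ x : ℂ, ∃ η > 0, ∀ y : ℂ, dist y x < η → dist (Q.eval y) (Q.eval x) < δ :=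
    fun x => Metric.continuous_iff.mp (Polynomial.continuous Q) x δ hδ
  choose η hη hspec using hcont
  rcases s.eq_empty_or_nonempty with h | h
  · exact ⟨1, one_pos, by simp [h]⟩
  · refine ⟨(s.image η).min' (h.image η), ?_, ?_⟩
    · obtain ⟨x, hx, hmin⟩ := Finset.mem_image.mp ((s.image η).min'_mem (h.image η))
      rw [← hmin]
      exact hη x
    · intro x hx y hy
      refine hspec x y (lt_of_lt_of_le hy ?_)
      exact Finset.min'_le _ _ (Finset.mem_image.mpr ⟨x, hx, rfl⟩)

lemma CV_spec (q : ℂ[X]) (hq' : q.derivative ≠ 0) :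
    criticalValues q = ↑(CVf q) := by
  unfold criticalValues CVf
  rw [Finset.coe_image]
  congr 1
  ext x
  simp [Multiset.mem_toFinset, mem_roots hq', IsRoot]

lemma CV_structure {s t : Finset ℂ} {ε ε' : ℝ} (hεε : ε' ≤ ε)
    (hsep : ∀ a ∈ t, ∀ b ∈ t, a ≠ b → 2*ε ≤ dist a b)
    (hcard : s.card = t.card)
    (h1 : ∀ b ∈ s, ∃ α ∈ t, dist b α < ε')
    (h2 : ∀ α ∈ t, ∃ b ∈ s, dist b α < ε')
    (B : ℂ → ℂ) (hB : ∀ α ∈ t, B α ∈ s ∧ dist (B α) α < ε) :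
    (∀ α ∈ t, dist (B α) α < ε') ∧ s = t.image B ∧ Set.InjOn B ↑t := by
  classical
  have huniq : ∀ b α α', α ∈ t → α' ∈ t → dist b α < ε → dist b α' < ε → α = α' := by
    intro b α α' hα hα' h h'
    by_contra hne
    have hs := hsep α hα α' hα' hne
    have : dist α α' < 2*ε :=
      calc dist α α' ≤ dist α b + dist b α' := dist_triangle _ _ _
        _ < ε + ε := add_lt_add (by rwa [dist_comm] at h) h'
        _ = 2*ε := by ring
    linarith
  set ν : ℂ → ℂ := fun b => if h : ∃ α, α ∈ t ∧ dist b α < ε then h.choose else 0 with hν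
  have hνspec : ∀ b α, α ∈ t → dist b α < ε → ν b = α := by
    intro b α hα hd
    have hex : ∃ α, α ∈ t ∧ dist b α < ε := ⟨α, hα, hd⟩
    rw [hν]
    simp only [dif_pos hex]
    exact huniq b _ _ hex.choose_spec.1 hα hex.choose_spec.2 hd
  have hνmem : ∀ b ∈ s, ν b ∈ t ∧ dist b (ν b) < ε := by
    intro b hb
    obtain ⟨α, hα, hd⟩ := h1 b hb
    rw [hνspec b α hα (lt_of_lt_of_le hd hεε)]
    exact ⟨hα, lt_of_lt_of_le hd hεε⟩
  have himg : s.image ν = t := by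
    apply Finset.Subset.antisymm
    · intro x hx
      obtain ⟨b, hb, rfl⟩ := Finset.mem_image.mp hx
      exact (hνmem b hb).1
    · intro α hα
      obtain ⟨b, hb, hd⟩ := h2 α hα
      exact Finset.mem_image.mpr ⟨b, hb, hνspec b α hα (lt_of_lt_of_le hd hεε)⟩
  have hνinj : Set.InjOn ν ↑s :=
    Finset.injOn_of_card_image_eq (by rw [himg, hcard])
  have hBν : ∀ α ∈ t, ν (B α) = α := fun α hα => hνspec _ _ hα (hB α hα).2
  have hc1 : ∀ α ∈ t, dist (B α) α < ε' := by
    intro α hα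
    obtain ⟨b, hb, hd⟩ := h2 α hα
    have : B α = b := hνinj (Finset.mem_coe.mpr (hB α hα).1) (Finset.mem_coe.mpr hb)
      (by rw [hBν α hα, hνspec b α hα (lt_of_lt_of_le hd hεε)])
    rw [this]
    exact hd
  refine ⟨hc1, ?_, ?_⟩
  · apply Finset.Subset.antisymm
    · intro b hb
      have hνb := hνmem b hb
      have hBb : B (ν b) = b := by
        refine hνinj (Finset.mem_coe.mpr (hB _ hνb.1).1) (Finset.mem_coe.mpr hb) ?_
        rw [hBν _ hνb.1, hνspec b (ν b) hνb.1 hνb.2]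
      exact Finset.mem_image.mpr ⟨ν b, hνb.1, hBb⟩
    · intro x hx
      obtain ⟨α, hα, rfl⟩ := Finset.mem_image.mp hx
      exact (hB α hα).1
  · intro α hα α' hα' heq
    rw [← hBν α hα, ← hBν α' hα', heq]

end Aux
section Key
open Filter Topology Polynomial

lemma natDegree_deriv {n : ℕ} (hn : 1 ≤ n) (Q : ℂ[X]) (hQd : Q.natDegree = n) :
    Q.derivative.natDegree = n - 1 := by
  have h := degree_derivative_eq Q (by omega)
  have := natDegree_eq_of_degree_eq_some h
  omega

lemma CV_approx {n : ℕ} (hn : 2 ≤ n) (Q : ℂ[X]) (hQd : Q.natDegree = n)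
    (q : ℕ → ℂ[X]) (hqd : ∀ k, (q k).natDegree = n)
    (hc : ∀ i, Tendsto (fun k => (q k).coeff i) atTop (nhds (Q.coeff i)))
    {ε : ℝ} (hε : 0 < ε) :
    ∀ᶠ k in atTop, (∀ b ∈ CVf (q k), ∃ α ∈ CVf Q, dist b α < ε) ∧
      (∀ α ∈ CVf Q, ∃ b ∈ CVf (q k), dist b α < ε) := by
  have hQ'd : Q.derivative.natDegree = n - 1 := natDegree_deriv (by omega) Q hQd
  have hq'd : ∀ k, (q k).derivative.natDegree = n - 1 :=
    fun k => natDegree_deriv (by omega) _ (hqd k)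
  have hc' : ∀ i, Tendsto (fun k => (q k).derivative.coeff i) atTop
      (nhds (Q.derivative.coeff i)) := by
    intro i
    simp only [coeff_derivative]
    exact (hc (i+1)).mul tendsto_const_nhds
  -- a bound for the roots of Q'
  obtain ⟨M0, hM0⟩ := Finset.exists_le (Q.derivative.roots.toFinset.image norm)
  set M : ℝ := M0 + 1 with hM
  have hδ : 0 < ε/2 := by linarith
  obtain ⟨η, hη, hmod⟩ := unif_mod Q (Q.derivative.roots.toFinset) hδ
  set ε' : ℝ := min η 1 with hε'
  have hε'pos : 0 < ε' := lt_min hη one_pos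
  filter_upwards [roots_matching (d := n - 1) (by omega) Q.derivative hQ'd
      (fun k => (q k).derivative) hq'd hc' hε'pos,
    unif_eval Q hQd.le q (fun k => (hqd k).le) hc M hδ] with k hmatch hu
  obtain ⟨σ, τ, hσ, hτ, hcl⟩ := hmatch
  have hτroot : ∀ i, τ i ∈ Q.derivative.roots.toFinset := by
    intro i
    exact Multiset.mem_toFinset.mpr (by rw [← hτ]; exact mem_ofFn_multiset.mpr ⟨i, rfl⟩)
  have hσroot : ∀ i, σ i ∈ (q k).derivative.roots.toFinset := by
    intro i
    exact Multiset.mem_toFinset.mpr (by rw [← hσ]; exact mem_ofFn_multiset.mpr ⟨i, rfl⟩)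
  have hσnorm : ∀ i, ‖σ i‖ ≤ M := by
    intro i
    have h1 : ‖τ i‖ ≤ M0 := hM0 _ (Finset.mem_image.mpr ⟨τ i, hτroot i, rfl⟩)
    have h2 : dist (σ i) (τ i) < 1 := lt_of_lt_of_le (hcl i) (min_le_right _ _)
    calc ‖σ i‖ = dist (σ i) 0 := (dist_zero_right _).symm
      _ ≤ dist (σ i) (τ i) + dist (τ i) 0 := dist_triangle _ _ _
      _ ≤ 1 + ‖τ i‖ := by
          rw [dist_zero_right]
          exact add_le_add h2.le le_rfl
      _ ≤ M0 + 1 := by linarith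
  have hval : ∀ i, dist ((q k).eval (σ i)) (Q.eval (τ i)) < ε := by
    intro i
    calc dist ((q k).eval (σ i)) (Q.eval (τ i))
        ≤ dist ((q k).eval (σ i)) (Q.eval (σ i)) + dist (Q.eval (σ i)) (Q.eval (τ i)) :=
          dist_triangle _ _ _
      _ < ε/2 + ε/2 := add_lt_add (hu _ (hσnorm i))
          (hmod _ (hτroot i) _ (lt_of_lt_of_le (hcl i) (min_le_left _ _)))
      _ = ε := by ring
  constructor
  · intro b hb
    obtain ⟨y, hy, rfl⟩ := Finset.mem_image.mp hb
    have : y ∈ ((List.ofFn σ : List ℂ) : Multiset ℂ) := by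
      rw [hσ]; exact Multiset.mem_toFinset.mp hy
    obtain ⟨i, rfl⟩ := mem_ofFn_multiset.mp this
    exact ⟨Q.eval (τ i), Finset.mem_image.mpr ⟨τ i, hτroot i, rfl⟩, hval i⟩
  · intro α hα
    obtain ⟨x, hx, rfl⟩ := Finset.mem_image.mp hα
    have : x ∈ ((List.ofFn τ : List ℂ) : Multiset ℂ) := by
      rw [hτ]; exact Multiset.mem_toFinset.mp hx
    obtain ⟨i, rfl⟩ := mem_ofFn_multiset.mp this
    exact ⟨(q k).eval (σ i), Finset.mem_image.mpr ⟨σ i, hσroot i, rfl⟩, hval i⟩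

lemma fiberMults_eq_counts (q : ℂ[X]) (b : ℂ) :
    fiberMults q b
      = Multiset.map (fun y => ((q - C b).roots).count y) (q - C b).roots.toFinset.val :=
  Multiset.map_congr rfl (fun x _ => (count_roots _).symm)

lemma key {n : ℕ} (hn : 2 ≤ n) (Q : ℂ[X]) (hQd : Q.natDegree = n)
    (q : ℕ → ℂ[X]) (hqd : ∀ k, (q k).natDegree = n)
    (hc : ∀ i, Tendsto (fun k => (q k).coeff i) atTop (nhds (Q.coeff i)))
    (hcards : ∀ k, (CVf (q k)).card = (CVf Q).card) :
    ∀ᶠ k in atTop, passport (q k) = passport Q := by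
  classical
  -- separation constant for critical values and all fiber roots of Q
  set E : Finset ℂ := CVf Q ∪ (CVf Q).biUnion (fun α => (Q - C α).roots.toFinset) with hE
  obtain ⟨ε, hε, hsepE⟩ := exists_sep E
  have hsepCV : ∀ a ∈ CVf Q, ∀ b ∈ CVf Q, a ≠ b → 2*ε ≤ dist a b := fun a ha b hb h =>
    hsepE a (Finset.mem_union_left _ ha) b (Finset.mem_union_left _ hb) h
  have hsepFib : ∀ α ∈ CVf Q, ∀ a ∈ (Q - C α).roots.toFinset,
      ∀ b ∈ (Q - C α).roots.toFinset, a ≠ b → 2*ε ≤ dist a b := by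
    intro α hα a ha b hb h
    exact hsepE a (Finset.mem_union_right _ (Finset.mem_biUnion.mpr ⟨α, hα, ha⟩))
      b (Finset.mem_union_right _ (Finset.mem_biUnion.mpr ⟨α, hα, hb⟩)) h
  -- approximate critical values
  set B : ℂ → ℕ → ℂ := fun α k =>
    if h : ∃ b, b ∈ CVf (q k) ∧ dist b α < ε then h.choose else 0 with hB
  have hstruct : ∀ ε₁ : ℝ, 0 < ε₁ → ε₁ ≤ ε → ∀ᶠ k in atTop,
      (∀ α ∈ CVf Q, dist (B α k) α < ε₁) ∧
        CVf (q k) = (CVf Q).image (fun α => B α k) ∧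
        Set.InjOn (fun α => B α k) ↑(CVf Q) := by
    intro ε₁ hε₁ hle
    filter_upwards [CV_approx hn Q hQd q hqd hc hε₁] with k hk
    obtain ⟨h1, h2⟩ := hk
    have hBk : ∀ α ∈ CVf Q, B α k ∈ CVf (q k) ∧ dist (B α k) α < ε := by
      intro α hα
      obtain ⟨b, hb, hd⟩ := h2 α hα
      have hex : ∃ b, b ∈ CVf (q k) ∧ dist b α < ε := ⟨b, hb, lt_of_lt_of_le hd hle⟩
      rw [hB]
      simp only [dif_pos hex]
      exact hex.choose_spec
    exact CV_structure hle hsepCV (hcards k) h1 h2 _ hBk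
  have hBtend : ∀ α ∈ CVf Q, Tendsto (fun k => B α k) atTop (nhds α) := by
    intro α hα
    rw [Metric.tendsto_atTop]
    intro ε₁ hε₁
    obtain ⟨N, hN⟩ := eventually_atTop.mp
      (hstruct (min ε₁ ε) (lt_min hε₁ hε) (min_le_right _ _))
    exact ⟨N, fun k hk => lt_of_lt_of_le ((hN k hk).1 α hα) (min_le_left _ _)⟩
  -- coefficient convergence for the fibers
  have hcfib : ∀ α ∈ CVf Q, ∀ i, Tendsto (fun k => (q k - C (B α k)).coeff i) atTop
      (nhds ((Q - C α).coeff i)) := by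
    intro α hα i
    simp only [coeff_sub, coeff_C]
    by_cases hi : i = 0
    · subst hi
      simp only [if_pos rfl]
      exact (hc 0).sub (hBtend α hα)
    · simp only [if_neg hi, sub_zero]
      exact hc i
  have hfibdeg : ∀ α : ℂ, ∀ k, (q k - C (B α k)).natDegree = n :=
    fun α k => by rw [natDegree_sub_C, hqd]
  have hQfibdeg : ∀ α : ℂ, (Q - C α).natDegree = n :=
    fun α => by rw [natDegree_sub_C, hQd]
  -- eventual fiber matchings
  have hfibmatch : ∀ᶠ k in atTop, ∀ α ∈ CVf Q, ∃ σ τ : Fin n → ℂ,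
      ((List.ofFn σ : List ℂ) : Multiset ℂ) = (q k - C (B α k)).roots ∧
      ((List.ofFn τ : List ℂ) : Multiset ℂ) = (Q - C α).roots ∧
      ∀ i, dist (σ i) (τ i) < ε :=
    (eventually_all_finset (CVf Q)).mpr fun α hα =>
      roots_matching (by omega) (Q - C α) (hQfibdeg α)
        (fun k => q k - C (B α k)) (hfibdeg α) (hcfib α hα) hε
  -- combine
  filter_upwards [hstruct ε hε le_rfl, hfibmatch] with k hstr hfib
  obtain ⟨hBdist, hCVim, hBinj⟩ := hstr
  have hsepτ : ∀ α ∈ CVf Q, ∀ (τ : Fin n → ℂ),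
      ((List.ofFn τ : List ℂ) : Multiset ℂ) = (Q - C α).roots →
      ∀ i j, τ i ≠ τ j → 2*ε ≤ dist (τ i) (τ j) := by
    intro α hα τ hτ i j hne
    have hmem : ∀ i, τ i ∈ (Q - C α).roots.toFinset := fun i =>
      Multiset.mem_toFinset.mpr (by rw [← hτ]; exact mem_ofFn_multiset.mpr ⟨i, rfl⟩)
    exact hsepFib α hα _ (hmem i) _ (hmem j) hne
  -- the automatic direction of the cardinality comparison
  have hcardge : ∀ α ∈ CVf Q,
      (Q - C α).roots.toFinset.card ≤ (q k - C (B α k)).roots.toFinset.card := by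
    intro α hα
    obtain ⟨σ, τ, hσ, hτ, hcl⟩ := hfib α hα
    have := matching_card_le σ τ (hsepτ α hα τ hτ) hcl
    rwa [hσ, hτ] at this
  -- sum over critical values
  have hsumQ := sum_fibers Q (by omega : 1 ≤ Q.natDegree)
  have hsumq := sum_fibers (q k) (by rw [hqd]; omega)
  have hsum_image : ∑ b ∈ CVf (q k), (q k - C b).roots.toFinset.card
      = ∑ α ∈ CVf Q, (q k - C (B α k)).roots.toFinset.card := by
    rw [hCVim]
    exact Finset.sum_image fun x hx y hy h => hBinj (Finset.mem_coe.mpr hx)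
      (Finset.mem_coe.mpr hy) h
  have hsums_eq : ∑ α ∈ CVf Q, (Q - C α).roots.toFinset.card
      = ∑ α ∈ CVf Q, (q k - C (B α k)).roots.toFinset.card := by
    rw [← hsum_image]
    have h1 := hsumQ
    have h2 := hsumq
    rw [hQd] at h1
    rw [hqd] at h2
    rw [hcards k] at h2
    omega
  have hcardeq : ∀ α ∈ CVf Q,
      (Q - C α).roots.toFinset.card = (q k - C (B α k)).roots.toFinset.card :=
    (Finset.sum_eq_sum_iff_of_le hcardge).mp hsums_eq
  -- fiber multiplicity multisets agree
  have hfibm : ∀ α ∈ CVf Q, fiberMults (q k) (B α k) = fiberMults Q α := by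
    intro α hα
    obtain ⟨σ, τ, hσ, hτ, hcl⟩ := hfib α hα
    have hm := matching_counts_eq σ τ (hsepτ α hα τ hτ) hcl
      (by rw [hσ, hτ, ← hcardeq α hα])
    rw [hσ, hτ] at hm
    rw [fiberMults_eq_counts, fiberMults_eq_counts]
    exact hm
  -- conclude for the passports
  have hpq : passport (q k) = (CVf (q k)).val.map (fun b => fiberMults (q k) b) := rfl
  have hpQ : passport Q = (CVf Q).val.map (fun α => fiberMults Q α) := rfl
  rw [hpq, hpQ, hCVim]
  have hnodup : (Multiset.map (fun α => B α k) (CVf Q).val).Nodup :=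
    Multiset.Nodup.map_on
      (fun x hx y hy => hBinj (Finset.mem_coe.mpr hx) (Finset.mem_coe.mpr hy))
      (CVf Q).nodup
  rw [Finset.image_val, Multiset.dedup_eq_self.mpr hnodup, Multiset.map_map]
  exact Multiset.map_congr rfl fun α hα => hfibm α hα

end Key
section Final
open Filter Topology Polynomial Set

instance : TopologicalSpace (Multiset (Multiset ℕ)) := ⊥
instance : DiscreteTopology (Multiset (Multiset ℕ)) := ⟨rfl⟩

lemma key_seq (n : ℕ) (hn : 1 ≤ n) (p : ℝ → ℂ[X])
    (hdeg : ∀ t ∈ Set.Ioo (0 : ℝ) 1, (p t).degree = n)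
    (hcont : ∀ i : ℕ, ContinuousOn (fun t => (p t).coeff i) (Set.Ioo (0 : ℝ) 1))
    (hZol : ∀ t ∈ Set.Ioo (0 : ℝ) 1, (criticalValues (p t)).ncard = 3)
    {x : ℝ} (hx : x ∈ Set.Ioo (0 : ℝ) 1) (u : ℕ → ℝ) (hu : ∀ k, u k ∈ Set.Ioo (0 : ℝ) 1)
    (hul : Tendsto u atTop (nhds x)) :
    ∀ᶠ k in atTop, passport (p (u k)) = passport (p x) := by
  have hnat : ∀ t ∈ Set.Ioo (0 : ℝ) 1, (p t).natDegree = n :=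
    fun t ht => natDegree_eq_of_degree_eq_some (hdeg t ht)
  have hder0 : ∀ t ∈ Set.Ioo (0 : ℝ) 1, (p t).derivative ≠ 0 := by
    intro t ht h
    have := natDegree_eq_zero_of_derivative_eq_zero h
    rw [hnat t ht] at this
    omega
  have hCV3 : ∀ t ∈ Set.Ioo (0 : ℝ) 1, (CVf (p t)).card = 3 := by
    intro t ht
    have h1 := hZol t ht
    rw [CV_spec (p t) (hder0 t ht), Set.ncard_coe_finset] at h1
    exact h1
  -- n is at least 4
  have hn2 : 2 ≤ n := by
    have h1 : (CVf (p x)).card ≤ (p x).derivative.roots.toFinset.card :=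
      Finset.card_image_le
    have h2 : (p x).derivative.roots.toFinset.card ≤ Multiset.card (p x).derivative.roots :=
      Multiset.toFinset_card_le _
    have h3 : Multiset.card (p x).derivative.roots = (p x).derivative.natDegree :=
      roots_card_C _
    have h4 : (p x).derivative.natDegree ≤ n - 1 := by
      have := natDegree_derivative_le (p x)
      rw [hnat x hx] at this
      exact this
    have := hCV3 x hx
    omega
  -- coefficient convergence along the sequence
  have husub : Tendsto u atTop (nhds x ⊓ Filter.principal (Set.Ioo 0 1)) := by
    rw [← nhdsWithin]
    exact tendsto_nhdsWithin_iff.mpr ⟨hul, Eventually.of_forall hu⟩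
  have hc : ∀ i, Tendsto (fun k => (p (u k)).coeff i) atTop (nhds ((p x).coeff i)) := by
    intro i
    have := (hcont i x hx).tendsto
    rw [← nhdsWithin] at husub
    exact this.comp husub
  exact key hn2 (p x) (hnat x hx) (fun k => p (u k)) (fun k => hnat _ (hu k)) hc
    (fun k => by rw [hCV3 _ (hu k), hCV3 x hx])

/-- In a continuous family of Zolotarev polynomials of degree `n`, all passports coincide. -/
theorem passport_constant (n : ℕ) (hn : 1 ≤ n) (p : ℝ → ℂ[X])
    (hdeg : ∀ t ∈ Set.Ioo (0 : ℝ) 1, (p t).degree = n)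
    (hcont : ∀ i : ℕ, ContinuousOn (fun t => (p t).coeff i) (Set.Ioo (0 : ℝ) 1))
    (hZol : ∀ t ∈ Set.Ioo (0 : ℝ) 1, (criticalValues (p t)).ncard = 3) :
    ∀ s ∈ Set.Ioo (0 : ℝ) 1, ∀ t ∈ Set.Ioo (0 : ℝ) 1, passport (p s) = passport (p t) := by
  intro s hs t ht
  set f : ℝ → Multiset (Multiset ℕ) := fun x => passport (p x) with hf
  have hcf : ContinuousOn f (Set.Ioo (0:ℝ) 1) := by
    intro x hx
    unfold ContinuousWithinAt
    rw [nhds_discrete, tendsto_pure]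
    rw [Filter.eventually_iff_seq_eventually]
    intro u hu
    have humem : ∀ᶠ k in atTop, u k ∈ Set.Ioo (0:ℝ) 1 := by
      have : Set.Ioo (0:ℝ) 1 ∈ nhdsWithin x (Set.Ioo (0:ℝ) 1) := self_mem_nhdsWithin
      exact hu this
    set u' : ℕ → ℝ := fun k => if u k ∈ Set.Ioo (0:ℝ) 1 then u k else x with hu'
    have hu'mem : ∀ k, u' k ∈ Set.Ioo (0:ℝ) 1 := by
      intro k
      by_cases h : u k ∈ Set.Ioo (0:ℝ) 1
      · show (if u k ∈ Set.Ioo (0:ℝ) 1 then u k else x) ∈ Set.Ioo (0:ℝ) 1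
        rw [if_pos h]; exact h
      · show (if u k ∈ Set.Ioo (0:ℝ) 1 then u k else x) ∈ Set.Ioo (0:ℝ) 1
        rw [if_neg h]; exact hx
    have hequ : ∀ᶠ k in atTop, u' k = u k := by
      filter_upwards [humem] with k hk
      show (if u k ∈ Set.Ioo (0:ℝ) 1 then u k else x) = u k
      rw [if_pos hk]
    have hu'lim : Tendsto u' atTop (nhds x) := by
      have hulim : Tendsto u atTop (nhds x) := hu.mono_right nhdsWithin_le_nhds
      exact hulim.congr' (hequ.mono fun k hk => hk.symm)
    have := key_seq n hn p hdeg hcont hZol hx u' hu'mem hu'lim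
    filter_upwards [this, hequ] with k h1 h2
    rw [hf]
    simp only
    rw [← h2]
    exact h1
  have himg : IsPreconnected (f '' Set.Ioo (0:ℝ) 1) :=
    (isPreconnected_Ioo).image f hcf
  have hsub : (f '' Set.Ioo (0:ℝ) 1).Subsingleton := himg.subsingleton
  exact hsub ⟨s, hs, rfl⟩ ⟨t, ht, rfl⟩

end Final
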